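/- Equivalence of the WMMSE surrogate and the rate: min over v and μ > 0 of μ·ε(v) − log μ equals −log(1+γ) + 1, where ε(v) is the MSE as a function of the receiver v with minimum ε^MMSE = 1/(1+γ). Consequently, maximizing the sum-rate is equivalent to minimizing ∑_k (μ_k ε_k − log μ_k) over receivers and positive weights. -/

import Mathlib

/-- Equivalence of the WMMSE surrogate and the rate:
`inf_{v ∈ ℂ, μ > 0} [μ ε(v) − log μ] = 1 − log(1 + γ)`, where
`ε(v) = |v|²(∑_i|e_i|² + σ²) − 2Re(v* e_k) + 1` and
`γ = |e_k|²/(σ² + ∑_{i≠k}|e_i|²)`. -/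
theorem wmmse_rate_equivalence (K : ℕ) (e : Fin K → ℂ) (k : Fin K)
    (σ2 : ℝ) (hσ : 0 < σ2) (ε : ℂ → ℝ)
    (hε : ∀ v : ℂ, ε v = ‖v‖ ^ 2 * ((∑ i, ‖e i‖ ^ 2) + σ2)
      - 2 * ((starRingEnd ℂ) v * e k).re + 1) :
    sInf {x : ℝ | ∃ (v : ℂ) (μ : ℝ), 0 < μ ∧ x = μ * ε v - Real.log μ} =
      1 - Real.log (1 + ‖e k‖ ^ 2 /
        (σ2 + ∑ i ∈ Finset.univ.erase k, ‖e i‖ ^ 2)) := by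
  set S : ℝ := (∑ i, ‖e i‖ ^ 2) + σ2 with hS
  set a : ℝ := ‖e k‖ ^ 2 with ha
  set T : ℝ := σ2 + ∑ i ∈ Finset.univ.erase k, ‖e i‖ ^ 2 with hT
  have hsum : ∑ i, ‖e i‖ ^ 2
      = a + ∑ i ∈ Finset.univ.erase k, ‖e i‖ ^ 2 :=
    (Finset.add_sum_erase _ _ (Finset.mem_univ k)).symm
  have hST : S = a + T := by rw [hS, hT, hsum]; ring
  have hTpos : 0 < T := by
    have : 0 ≤ ∑ i ∈ Finset.univ.erase k, ‖e i‖ ^ 2 :=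
      Finset.sum_nonneg fun i _ => by positivity
    rw [hT]; linarith
  have hapos : 0 ≤ a := by rw [ha]; positivity
  have hSpos : 0 < S := by linarith
  set c : ℝ := T / S with hc
  have hcpos : 0 < c := div_pos hTpos hSpos
  -- lower bound on ε
  have hεlb : ∀ v : ℂ, c ≤ ε v := by
    intro v
    rw [hε v, hc, div_le_iff₀ hSpos]
    have h1 : ((starRingEnd ℂ) v * e k).re ≤ ‖v‖ * ‖e k‖ :=
      calc ((starRingEnd ℂ) v * e k).re ≤ ‖(starRingEnd ℂ) v * e k‖ :=
            Complex.re_le_norm _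
        _ = ‖v‖ * ‖e k‖ := by rw [norm_mul, Complex.norm_conj]
    nlinarith [sq_nonneg (S * ‖v‖ - ‖e k‖), hSpos, h1, hST, ha,
      norm_nonneg v]
  -- the common value
  have hlogc : 1 + Real.log c
      = 1 - Real.log (1 + a / T) := by
    have h1 : 1 + a / T = S / T := by field_simp; linarith
    rw [h1, hc, Real.log_div hTpos.ne' hSpos.ne', Real.log_div hSpos.ne' hTpos.ne']
    ring
  -- lower bound for all elements of the set
  have hbdd : ∀ x ∈ {x : ℝ | ∃ (v : ℂ) (μ : ℝ), 0 < μ ∧ x = μ * ε v - Real.log μ},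
      1 + Real.log c ≤ x := by
    rintro x ⟨v, μ, hμ, rfl⟩
    have h1 : Real.log (μ * c) ≤ μ * c - 1 :=
      Real.log_le_sub_one_of_pos (mul_pos hμ hcpos)
    rw [Real.log_mul hμ.ne' hcpos.ne'] at h1
    have h2 : μ * c ≤ μ * ε v := mul_le_mul_of_nonneg_left (hεlb v) hμ.le
    linarith
  -- witness achieving the value
  have hmem : (1 + Real.log c) ∈
      {x : ℝ | ∃ (v : ℂ) (μ : ℝ), 0 < μ ∧ x = μ * ε v - Real.log μ} := by
    refine ⟨e k / (S : ℂ), c⁻¹, inv_pos.mpr hcpos, ?_⟩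
    have hεv : ε (e k / (S : ℂ)) = c := by
      have habs : ‖e k / (S : ℂ)‖ = ‖e k‖ / S := by
        rw [norm_div, Complex.norm_of_nonneg hSpos.le]
      have hre : ((starRingEnd ℂ) (e k / (S : ℂ)) * e k) = ((a / S : ℝ) : ℂ) := by
        rw [map_div₀, Complex.conj_ofReal, div_mul_eq_mul_div,
          ← Complex.normSq_eq_conj_mul_self, ← Complex.sq_norm, ← ha]
        push_cast
        ring
      rw [hε, habs, hre, Complex.ofReal_re, hc]
      clear_value c T a S
      have hS0 : S ≠ 0 := hSpos.ne'
      rw [div_pow, ← ha, pow_two, div_mul_eq_mul_div, mul_div_mul_right _ _ hS0,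
        eq_div_iff hS0]
      linear_combination (-1 : ℝ) * div_mul_cancel₀ a hS0 + hST
    rw [hεv, Real.log_inv, inv_mul_cancel₀ hcpos.ne']
    ring
  have : sInf {x : ℝ | ∃ (v : ℂ) (μ : ℝ), 0 < μ ∧ x = μ * ε v - Real.log μ}
      = 1 + Real.log c := by
    apply le_antisymm
    · exact csInf_le ⟨1 + Real.log c, fun x hx => hbdd x hx⟩ hmem
    · exact le_csInf ⟨_, hmem⟩ hbdd
  rw [this, hlogc]
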